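/- If a grid graph G = (V, E) with |V| = n and minimum degree at least 2 contains a Hamiltonian cycle, then the corresponding point set P of 5n points (each vertex v_i replaced by a center c_i on a grid of side length 3.4 together with four connectors at distance 1 from c_i along the four axis directions) admits a range assignment r with strongly connected induced graph and total interference exactly 9n: assign each center range 1, one connector per gadget (pointing along the outgoing Hamiltonian cycle edge) range 1.4, and all other connectors range 1. -/
import Mathlib

set_option maxHeartbeats 1000000

open scoped Classical

noncomputable section

abbrev Plane := EuclideanSpace ℝ (Fin 2)

/-- Adjacency in a grid graph: vertices of `ℤ × ℤ` at Euclidean distance exactly 1. -/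
def GridAdj (u v : ℤ × ℤ) : Prop := (u.1 - v.1) ^ 2 + (u.2 - v.2) ^ 2 = 1

/-- The center of the gadget of grid vertex `v`, on a grid of side length `3.4`. -/
def center (v : ℤ × ℤ) : Plane :=
  (3.4 * (v.1 : ℝ)) • EuclideanSpace.single 0 (1 : ℝ)
    + (3.4 * (v.2 : ℝ)) • EuclideanSpace.single 1 (1 : ℝ)

/-- The four unit-distance connectors of a gadget with center `c`. -/
def connectors (c : Plane) : Finset Plane :=
  {c + EuclideanSpace.single 0 1, c - EuclideanSpace.single 0 1,
   c + EuclideanSpace.single 1 1, c - EuclideanSpace.single 1 1}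

/-- The gadget `P_i`: the center together with its four connectors. -/
def gadget (c : Plane) : Finset Plane := insert c (connectors c)

/-- The point set of the reduction: one gadget of 5 points per grid vertex. -/
def reductionPoints (V : Finset (ℤ × ℤ)) : Finset Plane :=
  V.biUnion (fun v => gadget (center v))

/-- Total (sender-centric) interference of the graph induced by range assignment `r`. -/
def totalInterference (P : Finset Plane) (r : Plane → ℝ) : ℕ :=
  ∑ p ∈ P, (P.filter (fun q => q ≠ p ∧ dist p q ≤ r p)).card

namespace Red

/-- helper point constructor -/
def pt (a b : ℝ) : Plane :=
  a • EuclideanSpace.single 0 (1:ℝ) + b • EuclideanSpace.single 1 (1:ℝ)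

lemma pt_apply0 (a b : ℝ) : pt a b 0 = a := by
  simp [pt, EuclideanSpace.single_apply]

lemma pt_apply1 (a b : ℝ) : pt a b 1 = b := by
  simp [pt, EuclideanSpace.single_apply]

lemma dist_pt (a b c d : ℝ) : dist (pt a b) (pt c d) = Real.sqrt ((a-c)^2+(b-d)^2) := by
  rw [EuclideanSpace.dist_eq]
  norm_num [Fin.sum_univ_two, pt, EuclideanSpace.single_apply, Real.dist_eq, sq_abs]

/-- the five offsets -/
def offs : Finset (ℤ × ℤ) := {(0,0),(1,0),(-1,0),(0,1),(0,-1)}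

def gpt (v o : ℤ × ℤ) : Plane := pt (3.4*v.1 + o.1) (3.4*v.2 + o.2)

def uvec (o : ℤ × ℤ) : Prop :=
  (o.1 = 1 ∧ o.2 = 0) ∨ (o.1 = -1 ∧ o.2 = 0) ∨ (o.1 = 0 ∧ o.2 = 1) ∨ (o.1 = 0 ∧ o.2 = -1)

lemma off_cases {o : ℤ × ℤ} (h : o ∈ offs) :
    (o.1 = 0 ∧ o.2 = 0) ∨ (o.1 = 1 ∧ o.2 = 0) ∨ (o.1 = -1 ∧ o.2 = 0)
      ∨ (o.1 = 0 ∧ o.2 = 1) ∨ (o.1 = 0 ∧ o.2 = -1) := by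
  fin_cases h <;> norm_num

lemma mem_offs_iff {o : ℤ × ℤ} :
    o ∈ offs ↔ ((o.1 = 0 ∧ o.2 = 0) ∨ (o.1 = 1 ∧ o.2 = 0) ∨ (o.1 = -1 ∧ o.2 = 0)
      ∨ (o.1 = 0 ∧ o.2 = 1) ∨ (o.1 = 0 ∧ o.2 = -1)) := by
  constructor
  · exact off_cases
  · intro h
    simp only [offs, Finset.mem_insert, Finset.mem_singleton, Prod.ext_iff]
    omega

lemma uvec_mem {o : ℤ × ℤ} (h : uvec o) : o ∈ offs := by
  rw [mem_offs_iff]; unfold uvec at h; tauto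

lemma neg_mem_offs {o : ℤ × ℤ} (h : o ∈ offs) : -o ∈ offs := by
  rw [mem_offs_iff] at *
  simp only [Prod.fst_neg, Prod.snd_neg]
  omega

/-- key integer characterization -/
lemma key (a b s t : ℤ) (hs : -2 ≤ s) (hs' : s ≤ 2) (ht : -2 ≤ t) (ht' : t ≤ 2) :
    (17*a+5*s)^2 + (17*b+5*t)^2 ≤ 49 ↔
    ((a = 0 ∧ b = 0 ∧ ((s = 0 ∧ -1 ≤ t ∧ t ≤ 1) ∨ (t = 0 ∧ -1 ≤ s ∧ s ≤ 1)))
      ∨ (b = 0 ∧ t = 0 ∧ ((a = 1 ∧ s = -2) ∨ (a = -1 ∧ s = 2)))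
      ∨ (a = 0 ∧ s = 0 ∧ ((b = 1 ∧ t = -2) ∨ (b = -1 ∧ t = 2)))) := by
  constructor
  · intro h
    have h1 : 17*a+5*s ≤ 7 := by nlinarith [sq_nonneg (17*b+5*t), sq_nonneg (17*a+5*s-7)]
    have h2 : -7 ≤ 17*a+5*s := by nlinarith [sq_nonneg (17*b+5*t), sq_nonneg (17*a+5*s+7)]
    have h3 : 17*b+5*t ≤ 7 := by nlinarith [sq_nonneg (17*a+5*s), sq_nonneg (17*b+5*t-7)]
    have h4 : -7 ≤ 17*b+5*t := by nlinarith [sq_nonneg (17*a+5*s), sq_nonneg (17*b+5*t+7)]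
    have ha2 : -1 ≤ a := by omega
    have ha3 : a ≤ 1 := by omega
    have hb2 : -1 ≤ b := by omega
    have hb3 : b ≤ 1 := by omega
    interval_cases a <;> interval_cases b <;> interval_cases s <;> interval_cases t <;> omega
  · rintro (⟨rfl, rfl, (⟨rfl, h1, h2⟩|⟨rfl, h1, h2⟩)⟩ |
      ⟨rfl, rfl, (⟨rfl, rfl⟩|⟨rfl, rfl⟩)⟩ | ⟨rfl, rfl, (⟨rfl, rfl⟩|⟨rfl, rfl⟩)⟩) <;>
      nlinarith

lemma key25 (a b s t : ℤ) (hs : -2 ≤ s) (hs' : s ≤ 2) (ht : -2 ≤ t) (ht' : t ≤ 2) :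
    (17*a+5*s)^2 + (17*b+5*t)^2 ≤ 25 ↔
    (a = 0 ∧ b = 0 ∧ ((s = 0 ∧ -1 ≤ t ∧ t ≤ 1) ∨ (t = 0 ∧ -1 ≤ s ∧ s ≤ 1))) := by
  constructor
  · intro h
    have h49 : (17*a+5*s)^2 + (17*b+5*t)^2 ≤ 49 := by omega
    rcases (key a b s t hs hs' ht ht').1 h49 with h' | h' | h'
    · exact h'
    · exfalso
      rcases h' with ⟨rfl, rfl, (⟨rfl, rfl⟩|⟨rfl, rfl⟩)⟩ <;> norm_num at h
    · exfalso
      rcases h' with ⟨rfl, rfl, (⟨rfl, rfl⟩|⟨rfl, rfl⟩)⟩ <;> norm_num at h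
  · rintro ⟨rfl, rfl, (⟨rfl, h1, h2⟩|⟨rfl, h1, h2⟩)⟩ <;> nlinarith

/-- distance between gadget points, scaled to integers -/
lemma dist_le_iff (u w o o'' : ℤ × ℤ) (c : ℤ) (hc : (0:ℝ) ≤ (c:ℝ)) :
    dist (gpt u o) (gpt w o'') ≤ (c:ℝ)/5 ↔
    (17*(u.1-w.1)+5*(o.1-o''.1))^2 + (17*(u.2-w.2)+5*(o.2-o''.2))^2 ≤ c^2 := by
  unfold gpt
  rw [dist_pt]
  have hX : ((3.4*u.1+o.1) - (3.4*w.1+o''.1))^2 + ((3.4*u.2+o.2) - (3.4*w.2+o''.2))^2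
      = (((17*(u.1-w.1)+5*(o.1-o''.1))^2 + (17*(u.2-w.2)+5*(o.2-o''.2))^2 : ℤ) : ℝ)/25 := by
    push_cast; ring
  rw [hX, Real.sqrt_le_iff]
  constructor
  · rintro ⟨-, h⟩
    have h' : (((17*(u.1-w.1)+5*(o.1-o''.1))^2 + (17*(u.2-w.2)+5*(o.2-o''.2))^2 : ℤ) : ℝ)
        ≤ ((c^2 : ℤ) : ℝ) := by push_cast at h ⊢; nlinarith
    exact_mod_cast h'
  · intro h
    have hc5 : (0:ℝ) ≤ (c:ℝ)/5 := by linarith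
    refine ⟨hc5, ?_⟩
    have h' : (((17*(u.1-w.1)+5*(o.1-o''.1))^2 + (17*(u.2-w.2)+5*(o.2-o''.2))^2 : ℤ) : ℝ)
        ≤ ((c^2 : ℤ) : ℝ) := by exact_mod_cast h
    push_cast at h' ⊢; nlinarith

lemma near1 {u w o o'' : ℤ × ℤ} (ho : o ∈ offs) (ho'' : o'' ∈ offs) :
    dist (gpt u o) (gpt w o'') ≤ 1 ↔ (u = w ∧ (o = o'' ∨ o = (0,0) ∨ o'' = (0,0))) := by
  have h1 := off_cases ho
  have h2 := off_cases ho''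
  rw [show (1:ℝ) = ((5:ℤ):ℝ)/5 by norm_num,
    dist_le_iff u w o o'' 5 (by norm_num),
    show ((5:ℤ)^2 = 25) by norm_num,
    key25 _ _ _ _ (by omega) (by omega) (by omega) (by omega)]
  simp only [Prod.ext_iff]
  omega

lemma near7 {u w o o'' : ℤ × ℤ} (ho : o ∈ offs) (ho'' : o'' ∈ offs) :
    dist (gpt u o) (gpt w o'') ≤ 1.4 ↔
    ((u = w ∧ (o = o'' ∨ o = (0,0) ∨ o'' = (0,0))) ∨ (uvec o ∧ w = u + o ∧ o'' = -o)) := by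
  have h1 := off_cases ho
  have h2 := off_cases ho''
  rw [show (1.4:ℝ) = ((7:ℤ):ℝ)/5 by norm_num,
    dist_le_iff u w o o'' 7 (by norm_num),
    show ((7:ℤ)^2 = 49) by norm_num,
    key _ _ _ _ (by omega) (by omega) (by omega) (by omega)]
  simp only [Prod.ext_iff, Prod.fst_add, Prod.snd_add, Prod.fst_neg, Prod.snd_neg, uvec]
  rcases h1 with ⟨e1,e2⟩|⟨e1,e2⟩|⟨e1,e2⟩|⟨e1,e2⟩|⟨e1,e2⟩ <;>
    rcases h2 with ⟨e3,e4⟩|⟨e3,e4⟩|⟨e3,e4⟩|⟨e3,e4⟩|⟨e3,e4⟩ <;> omega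

lemma gpt_inj {u v o o' : ℤ × ℤ} (ho : o ∈ offs) (ho' : o' ∈ offs) :
    gpt u o = gpt v o' ↔ u = v ∧ o = o' := by
  constructor
  · intro h
    have e0 : (3.4*u.1 + o.1 : ℝ) = 3.4*v.1 + o'.1 := by
      have h0 : gpt u o 0 = gpt v o' 0 := by rw [h]
      rwa [gpt, gpt, pt_apply0, pt_apply0] at h0
    have e1 : (3.4*u.2 + o.2 : ℝ) = 3.4*v.2 + o'.2 := by
      have h0 : gpt u o 1 = gpt v o' 1 := by rw [h]
      rwa [gpt, gpt, pt_apply1, pt_apply1] at h0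
    have i0 : 17*u.1 + 5*o.1 = 17*v.1 + 5*o'.1 := by
      have : ((17*u.1 + 5*o.1 : ℤ) : ℝ) = ((17*v.1 + 5*o'.1 : ℤ) : ℝ) := by
        push_cast; nlinarith
      exact_mod_cast this
    have i1 : 17*u.2 + 5*o.2 = 17*v.2 + 5*o'.2 := by
      have : ((17*u.2 + 5*o.2 : ℤ) : ℝ) = ((17*v.2 + 5*o'.2 : ℤ) : ℝ) := by
        push_cast; nlinarith
      exact_mod_cast this
    have b1 := off_cases ho
    have b2 := off_cases ho'
    constructor <;> · rw [Prod.ext_iff]; omega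
  · rintro ⟨rfl, rfl⟩; rfl

lemma uvec_of_sq {x y : ℤ} (h : x^2 + y^2 = 1) :
    (x = 1 ∧ y = 0) ∨ (x = -1 ∧ y = 0) ∨ (x = 0 ∧ y = 1) ∨ (x = 0 ∧ y = -1) := by
  have hx1 : -1 ≤ x := by nlinarith [sq_nonneg y, sq_nonneg (x+1)]
  have hx2 : x ≤ 1 := by nlinarith [sq_nonneg y, sq_nonneg (x-1)]
  have hy1 : -1 ≤ y := by nlinarith [sq_nonneg x, sq_nonneg (y+1)]
  have hy2 : y ≤ 1 := by nlinarith [sq_nonneg x, sq_nonneg (y-1)]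
  interval_cases x <;> interval_cases y <;> omega

lemma zero_mem_offs : ((0,0) : ℤ × ℤ) ∈ offs := by decide

lemma center_eq (v : ℤ × ℤ) : center v = gpt v (0,0) := by
  unfold center gpt pt; norm_num

lemma gadget_eq (v : ℤ × ℤ) : gadget (center v) = offs.image (gpt v) := by
  have h0 : center v = gpt v (0,0) := center_eq v
  have hA : center v + EuclideanSpace.single 0 1 = gpt v (1,0) := by
    unfold center gpt pt; push_cast; module
  have hB : center v - EuclideanSpace.single 0 1 = gpt v (-1,0) := by
    unfold center gpt pt; push_cast; module
  have hC : center v + EuclideanSpace.single 1 1 = gpt v (0,1) := by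
    unfold center gpt pt; push_cast; module
  have hD : center v - EuclideanSpace.single 1 1 = gpt v (0,-1) := by
    unfold center gpt pt; push_cast; module
  unfold gadget connectors offs
  rw [Finset.image_insert, Finset.image_insert, Finset.image_insert, Finset.image_insert,
    Finset.image_singleton, hA, hB, hC, hD, h0]

lemma mem_reduction {V : Finset (ℤ × ℤ)} {p : Plane} :
    p ∈ reductionPoints V ↔ ∃ v ∈ V, ∃ o ∈ offs, p = gpt v o := by
  unfold reductionPoints
  simp only [Finset.mem_biUnion, gadget_eq, Finset.mem_image]
  constructor
  · rintro ⟨v, hv, o, ho, rfl⟩; exact ⟨v, hv, o, ho, rfl⟩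
  · rintro ⟨v, hv, o, ho, rfl⟩; exact ⟨v, hv, o, ho, rfl⟩

end Red

open Red

/-- if a grid graph `V` with minimum degree at least 2 has a Hamiltonian
cycle, then the corresponding `5n`-point set admits a nonnegative range assignment whose
induced graph is strongly connected and whose total interference is exactly `9n`. -/
theorem hamiltonian_gives_9n_assignment (V : Finset (ℤ × ℤ)) (n : ℕ) (hn : n = V.card)
    (hn3 : 3 ≤ n)
    (hdeg : ∀ v ∈ V, 2 ≤ (V.filter (fun u => GridAdj u v)).card)
    (ham : ∃ f : ZMod n → ℤ × ℤ, Function.Injective f ∧ (∀ k, f k ∈ V) ∧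
      ∀ k : ZMod n, GridAdj (f k) (f (k + 1))) :
    ∃ r : Plane → ℝ, (∀ p, 0 ≤ r p) ∧
      (∀ p ∈ reductionPoints V, ∀ q ∈ reductionPoints V,
        Relation.ReflTransGen
          (fun a b => a ∈ reductionPoints V ∧ b ∈ reductionPoints V ∧ dist a b ≤ r a) p q) ∧
      totalInterference (reductionPoints V) r = 9 * n := by
  classical
  obtain ⟨f, hfinj, hfV, hfadj⟩ := ham
  haveI : NeZero n := ⟨by omega⟩
  haveI : Fact (1 < n) := ⟨by omega⟩
  set d : ZMod n → ℤ × ℤ := fun k => f (k+1) - f k with hd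
  have hduv : ∀ k, uvec (d k) := by
    intro k
    have h := hfadj k
    rw [GridAdj] at h
    have h4 := uvec_of_sq h
    unfold uvec
    simp only [hd, Prod.fst_sub, Prod.snd_sub]
    omega
  have hdmem : ∀ k, d k ∈ offs := fun k => uvec_mem (hduv k)
  have hdne : ∀ k, d k ≠ (0,0) := by
    intro k h
    have h4 := hduv k
    rw [h] at h4
    simp [uvec] at h4
  have hdadd : ∀ k, f k + d k = f (k+1) := by
    intro k; simp only [hd]; abel
  have hsurj : ∀ v ∈ V, ∃ k, f k = v := by
    intro v hv
    have hcard : (Finset.univ.image f).card = V.card := by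
      rw [Finset.card_image_of_injective _ hfinj, Finset.card_univ, ZMod.card, hn]
    have hsub : Finset.univ.image f ⊆ V := by
      intro x hx
      rw [Finset.mem_image] at hx
      obtain ⟨k, -, rfl⟩ := hx
      exact hfV k
    have heq : Finset.univ.image f = V := Finset.eq_of_subset_of_card_le hsub (le_of_eq hcard.symm)
    have : v ∈ Finset.univ.image f := heq ▸ hv
    rw [Finset.mem_image] at this
    obtain ⟨k, -, hk⟩ := this
    exact ⟨k, hk⟩
  set P := reductionPoints V with hPdef
  set r : Plane → ℝ := fun p => if ∃ k : ZMod n, p = gpt (f k) (d k) then 1.4 else 1 with hr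
  have hr1 : ∀ p, (1:ℝ) ≤ r p := by
    intro p; simp only [hr]; split_ifs <;> norm_num
  have hr0 : ∀ p, (0:ℝ) ≤ r p := fun p => le_trans zero_le_one (hr1 p)
  have hrval : ∀ (k : ZMod n) (o : ℤ × ℤ), o ∈ offs →
      r (gpt (f k) o) = if o = d k then 1.4 else 1 := by
    intro k o ho
    by_cases h : o = d k
    · rw [if_pos h]
      simp only [hr]
      rw [if_pos ⟨k, by rw [h]⟩]
    · rw [if_neg h]
      simp only [hr]
      rw [if_neg]
      rintro ⟨k', hk'⟩
      rw [gpt_inj ho (hdmem k')] at hk'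
      obtain ⟨hv, hoo⟩ := hk'
      have : k = k' := hfinj hv
      subst this
      exact h hoo
  have hmem : ∀ v ∈ V, ∀ o ∈ offs, gpt v o ∈ P := by
    intro v hv o ho
    rw [hPdef, mem_reduction]
    exact ⟨v, hv, o, ho, rfl⟩
  refine ⟨r, hr0, ?_, ?_⟩
  · -- connectivity
    set Rel : Plane → Plane → Prop := fun a b => a ∈ P ∧ b ∈ P ∧ dist a b ≤ r a with hRel
    have step_to_center : ∀ v ∈ V, ∀ o ∈ offs, Rel (gpt v o) (gpt v (0,0)) := by
      intro v hv o ho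
      exact ⟨hmem v hv o ho, hmem v hv _ zero_mem_offs,
        le_trans ((near1 ho zero_mem_offs).2 ⟨rfl, Or.inr (Or.inr rfl)⟩) (hr1 _)⟩
    have step_from_center : ∀ v ∈ V, ∀ o ∈ offs, Rel (gpt v (0,0)) (gpt v o) := by
      intro v hv o ho
      exact ⟨hmem v hv _ zero_mem_offs, hmem v hv o ho,
        le_trans ((near1 zero_mem_offs ho).2 ⟨rfl, Or.inr (Or.inl rfl)⟩) (hr1 _)⟩
    have step_boost : ∀ k, Rel (gpt (f k) (d k)) (gpt (f (k+1)) (-(d k))) := by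
      intro k
      refine ⟨hmem _ (hfV k) _ (hdmem k), hmem _ (hfV (k+1)) _ (neg_mem_offs (hdmem k)), ?_⟩
      have hdist : dist (gpt (f k) (d k)) (gpt (f (k+1)) (-(d k))) ≤ 1.4 :=
        (near7 (hdmem k) (neg_mem_offs (hdmem k))).2 (Or.inr ⟨hduv k, (hdadd k).symm, rfl⟩)
      have hrc : r (gpt (f k) (d k)) = 1.4 := by rw [hrval k _ (hdmem k), if_pos rfl]
      rw [hrc]; exact hdist
    have center_step : ∀ k, Relation.ReflTransGen Rel (gpt (f k) (0,0)) (gpt (f (k+1)) (0,0)) := by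
      intro k
      exact Relation.ReflTransGen.head (step_from_center _ (hfV k) _ (hdmem k))
        (Relation.ReflTransGen.head (step_boost k)
          (Relation.ReflTransGen.single
            (step_to_center _ (hfV (k+1)) _ (neg_mem_offs (hdmem k)))))
    have center_reach : ∀ (m : ℕ) (k : ZMod n),
        Relation.ReflTransGen Rel (gpt (f k) (0,0)) (gpt (f (k + (m : ZMod n))) (0,0)) := by
      intro m
      induction m with
      | zero => intro k; simp only [Nat.cast_zero, add_zero]; exact Relation.ReflTransGen.refl
      | succ m ih =>
        intro k
        have h1 := ih k
        have h2 := center_step (k + (m : ZMod n))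
        have he : (k + (m : ZMod n)) + 1 = k + (((m+1 : ℕ)) : ZMod n) := by push_cast; ring
        rw [he] at h2
        exact h1.trans h2
    have center_all : ∀ k j : ZMod n,
        Relation.ReflTransGen Rel (gpt (f k) (0,0)) (gpt (f j) (0,0)) := by
      intro k j
      have h := center_reach (j - k).val k
      have he : k + (((j - k).val : ℕ) : ZMod n) = j := by
        rw [ZMod.natCast_rightInverse (j - k)]; ring
      rwa [he] at h
    intro p hp q hq
    rw [hPdef, mem_reduction] at hp hq
    obtain ⟨v, hv, o, ho, rfl⟩ := hp
    obtain ⟨w, hw, o', ho', rfl⟩ := hq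
    obtain ⟨k, rfl⟩ := hsurj v hv
    obtain ⟨j, rfl⟩ := hsurj w hw
    exact (Relation.ReflTransGen.single (step_to_center _ (hfV k) o ho)).trans
      ((center_all k j).trans
        (Relation.ReflTransGen.single (step_from_center _ (hfV j) o' ho')))
  · -- interference count
    have hone_ne : (1 : ZMod n) ≠ 0 := one_ne_zero
    have hN : ∀ (k : ZMod n) (o : ℤ × ℤ), o ∈ offs →
        (P.filter (fun q => q ≠ gpt (f k) o ∧ dist (gpt (f k) o) q ≤ r (gpt (f k) o))).card
        = (if o = (0,0) then 4 else if o = d k then 2 else 1) := by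
      intro k o ho
      by_cases h0 : o = (0,0)
      · subst h0
        rw [if_pos rfl]
        have hrc : r (gpt (f k) (0,0)) = 1 := by
          rw [hrval k _ zero_mem_offs, if_neg (fun h => hdne k h.symm)]
        have hset : (P.filter (fun q => q ≠ gpt (f k) (0,0) ∧
            dist (gpt (f k) (0,0)) q ≤ r (gpt (f k) (0,0))))
            = (offs.erase (0,0)).image (gpt (f k)) := by
          ext q
          simp only [Finset.mem_filter, Finset.mem_image, Finset.mem_erase, hPdef,
            mem_reduction, hrc]
          constructor
          · rintro ⟨⟨w, hw, o'', ho'', rfl⟩, hne, hdist⟩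
            rw [near1 zero_mem_offs ho''] at hdist
            obtain ⟨hfw, -⟩ := hdist
            subst hfw
            refine ⟨o'', ⟨?_, ho''⟩, rfl⟩
            intro h; rw [h] at hne; exact hne rfl
          · rintro ⟨o'', ⟨hne0, ho''⟩, rfl⟩
            refine ⟨⟨f k, hfV k, o'', ho'', rfl⟩, ?_, ?_⟩
            · intro h
              rw [gpt_inj ho'' zero_mem_offs] at h
              exact hne0 h.2
            · rw [near1 zero_mem_offs ho'']
              exact ⟨rfl, Or.inr (Or.inl rfl)⟩
        rw [hset, Finset.card_image_of_injOn, Finset.card_erase_of_mem zero_mem_offs]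
        · rfl
        · intro x hx y hy hxy
          exact ((gpt_inj (Finset.mem_of_mem_erase hx) (Finset.mem_of_mem_erase hy)).1 hxy).2
      · by_cases hdk : o = d k
        · rw [if_neg h0, if_pos hdk]
          have hduv' : uvec o := by rw [hdk]; exact hduv k
          have hdadd' : f k + o = f (k+1) := by rw [hdk]; exact hdadd k
          have hrc : r (gpt (f k) o) = 1.4 := by rw [hrval k _ ho, if_pos hdk]
          have hne2 : f (k+1) ≠ f k := by
            intro h
            have : k + 1 = k := hfinj h
            have h10 : (1 : ZMod n) = 0 := by
              have := this
              nth_rewrite 2 [← add_zero k] at this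
              exact add_left_cancel this
            exact hone_ne h10
          have hset : (P.filter (fun q => q ≠ gpt (f k) o ∧
              dist (gpt (f k) o) q ≤ r (gpt (f k) o)))
              = {gpt (f k) (0,0), gpt (f (k+1)) (-o)} := by
            ext q
            simp only [Finset.mem_filter, Finset.mem_insert, Finset.mem_singleton, hPdef,
              mem_reduction, hrc]
            constructor
            · rintro ⟨⟨w, hw, o'', ho'', rfl⟩, hne, hdist⟩
              rw [near7 ho ho''] at hdist
              rcases hdist with ⟨hfw, hcase⟩ | ⟨-, hwk, ho''neg⟩
              · subst hfw
                rcases hcase with hc | hc | hc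
                · exfalso; rw [hc] at hne; exact hne rfl
                · exact absurd hc h0
                · left; rw [hc]
              · right
                rw [hwk, hdadd', ho''neg]
            · rintro (rfl | rfl)
              · refine ⟨⟨f k, hfV k, (0,0), zero_mem_offs, rfl⟩, ?_, ?_⟩
                · intro hq
                  rw [gpt_inj zero_mem_offs ho] at hq
                  exact h0 hq.2.symm
                · rw [near7 ho zero_mem_offs]
                  exact Or.inl ⟨rfl, Or.inr (Or.inr rfl)⟩
              · refine ⟨⟨f (k+1), hfV (k+1), -o, neg_mem_offs ho, rfl⟩, ?_, ?_⟩
                · intro hq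
                  rw [gpt_inj (neg_mem_offs ho) ho] at hq
                  exact hne2 hq.1
                · rw [near7 ho (neg_mem_offs ho)]
                  exact Or.inr ⟨hduv', hdadd'.symm, rfl⟩
          rw [hset]
          rw [Finset.card_insert_of_notMem, Finset.card_singleton]
          intro hq
          rw [Finset.mem_singleton, gpt_inj zero_mem_offs (neg_mem_offs ho)] at hq
          exact hne2 hq.1.symm
        · rw [if_neg h0, if_neg hdk]
          have hrc : r (gpt (f k) o) = 1 := by rw [hrval k _ ho, if_neg hdk]
          have hset : (P.filter (fun q => q ≠ gpt (f k) o ∧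
              dist (gpt (f k) o) q ≤ r (gpt (f k) o))) = {gpt (f k) (0,0)} := by
            ext q
            simp only [Finset.mem_filter, Finset.mem_singleton, hPdef, mem_reduction, hrc]
            constructor
            · rintro ⟨⟨w, hw, o'', ho'', rfl⟩, hne, hdist⟩
              rw [near1 ho ho''] at hdist
              obtain ⟨hfw, hcase⟩ := hdist
              subst hfw
              rcases hcase with hc | hc | hc
              · exfalso; rw [hc] at hne; exact hne rfl
              · exact absurd hc h0
              · rw [hc]
            · rintro rfl
              refine ⟨⟨f k, hfV k, (0,0), zero_mem_offs, rfl⟩, ?_, ?_⟩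
              · intro hq
                rw [gpt_inj zero_mem_offs ho] at hq
                exact h0 hq.2.symm
              · rw [near1 ho zero_mem_offs]
                exact ⟨rfl, Or.inr (Or.inr rfl)⟩
          rw [hset, Finset.card_singleton]
    -- sum up
    have hdisj : (V : Set (ℤ × ℤ)).PairwiseDisjoint (fun v => gadget (center v)) := by
      intro x hx y hy hxy
      rw [Function.onFun, Finset.disjoint_left]
      intro p hpx hpy
      rw [gadget_eq, Finset.mem_image] at hpx hpy
      obtain ⟨o1, ho1, rfl⟩ := hpx
      obtain ⟨o2, ho2, heq⟩ := hpy
      exact hxy (((gpt_inj ho2 ho1).1 heq).1).symm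
    have hgadget9 : ∀ v ∈ V,
        ∑ p ∈ gadget (center v), (P.filter (fun q => q ≠ p ∧ dist p q ≤ r p)).card = 9 := by
      intro v hv
      obtain ⟨k, rfl⟩ := hsurj v hv
      rw [gadget_eq, Finset.sum_image (fun x hx y hy hxy => ((gpt_inj hx hy).1 hxy).2)]
      rw [Finset.sum_congr rfl (fun o ho => hN k o ho)]
      have hd4 : d k = (1,0) ∨ d k = (-1,0) ∨ d k = (0,1) ∨ d k = (0,-1) := by
        rcases hduv k with ⟨h1, h2⟩ | ⟨h1, h2⟩ | ⟨h1, h2⟩ | ⟨h1, h2⟩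
        · exact Or.inl (Prod.ext_iff.mpr ⟨h1, h2⟩)
        · exact Or.inr (Or.inl (Prod.ext_iff.mpr ⟨h1, h2⟩))
        · exact Or.inr (Or.inr (Or.inl (Prod.ext_iff.mpr ⟨h1, h2⟩)))
        · exact Or.inr (Or.inr (Or.inr (Prod.ext_iff.mpr ⟨h1, h2⟩)))
      rcases hd4 with hdk | hdk | hdk | hdk <;> rw [hdk] <;> decide
    calc totalInterference P r
        = ∑ p ∈ V.biUnion (fun v => gadget (center v)),
            (P.filter (fun q => q ≠ p ∧ dist p q ≤ r p)).card := rfl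
      _ = ∑ v ∈ V, ∑ p ∈ gadget (center v),
            (P.filter (fun q => q ≠ p ∧ dist p q ≤ r p)).card := Finset.sum_biUnion hdisj
      _ = ∑ _v ∈ V, 9 := Finset.sum_congr rfl hgadget9
      _ = 9 * n := by rw [Finset.sum_const, smul_eq_mul, hn, Nat.mul_comm]

end
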